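/- If a Kenmotsu manifold M^{2n+1}(φ,ξ,η,g) admits an almost η-Ricci soliton with potential vector field V = τξ for a smooth function τ on M and soliton functions λ, μ, then ξ(τ) = 2n − λ − μ and the Ricci tensor satisfies Ric = −(τ+λ)g − (2n − τ − λ)η⊗η; in particular, (M,g) is η-Einstein. -/
import Mathlib


/-!
An abstract algebraic model of a `(2n+1)`-dimensional Kenmotsu manifold
`M^{2n+1}(φ, ξ, η, g)`.  `M` is the set of points and `VF` is the space of
(smooth) vector fields, regarded as a module over the ring `M → ℝ` of
(smooth) functions.  The metric `g`, the Levi-Civita connection `∇`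
(torsion-free and metric), the Lie bracket, the almost contact structure
`(φ, ξ, η)` (with `φ² = -I + η ⊗ ξ`, `η(ξ) = 1`,
`g(φX, φY) = g(X,Y) - η(X)η(Y)`) and the Kenmotsu condition
`(∇_X φ)Y = g(φX, Y)ξ - η(Y)φX` are encoded as data together with their
defining identities.  The Riemann curvature `R`, the Ricci tensor `Ric`,
the Ricci operator `Q` and the scalar curvature `r` are defined from this
data via a (global) orthonormal frame.
-/

structure Kenmotsu (n : ℕ) (M : Type) (VF : Type) [AddCommGroup VF]
    [Module (M → ℝ) VF] where
  /-- directional derivative of a function along a vector field: `X(f)` -/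
  act : VF → (M → ℝ) → (M → ℝ)
  /-- the Riemannian metric -/
  g : VF → VF → M → ℝ
  /-- the Levi-Civita connection `∇` -/
  nabla : VF → VF → VF
  /-- the Lie bracket of vector fields -/
  bracket : VF → VF → VF
  /-- the `(1,1)`-tensor field `φ` -/
  phi : VF → VF
  /-- the Reeb vector field `ξ` -/
  xi : VF
  /-- the 1-form `η` -/
  eta : VF → M → ℝ
  /-- a (global) orthonormal frame -/
  frame : Fin (2 * n + 1) → VF
  act_add : ∀ X Y f, act (X + Y) f = act X f + act Y f
  act_smul : ∀ (h : M → ℝ) (X f), act (h • X) f = h * act X f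
  act_fun_add : ∀ X f₁ f₂, act X (f₁ + f₂) = act X f₁ + act X f₂
  act_fun_mul : ∀ X f₁ f₂, act X (f₁ * f₂) = act X f₁ * f₂ + f₁ * act X f₂
  act_const : ∀ (X) (c : ℝ), act X (fun _ => c) = 0
  g_symm : ∀ X Y, g X Y = g Y X
  g_add_left : ∀ X Y Z, g (X + Y) Z = g X Z + g Y Z
  g_smul_left : ∀ (f : M → ℝ) (X Y), g (f • X) Y = f * g X Y
  nabla_add_left : ∀ X Y Z, nabla (X + Y) Z = nabla X Z + nabla Y Z
  nabla_smul_left : ∀ (f : M → ℝ) (X Y), nabla (f • X) Y = f • nabla X Y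
  nabla_add_right : ∀ X Y Z, nabla X (Y + Z) = nabla X Y + nabla X Z
  nabla_leibniz : ∀ (X) (f : M → ℝ) (Y), nabla X (f • Y) = act X f • Y + f • nabla X Y
  /-- `∇` is torsion free -/
  torsion_free : ∀ X Y, nabla X Y - nabla Y X = bracket X Y
  /-- `∇ g = 0` -/
  metric_compat : ∀ X Y Z, act X (g Y Z) = g (nabla X Y) Z + g Y (nabla X Z)
  /-- `φ² = -I + η ⊗ ξ` -/
  phi_phi : ∀ X, phi (phi X) = -X + eta X • xi
  /-- `η(ξ) = 1` -/
  eta_xi : eta xi = fun _ => 1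
  /-- `g(φX, φY) = g(X,Y) - η(X)η(Y)` -/
  acm_compatible : ∀ X Y, g (phi X) (phi Y) = g X Y - eta X * eta Y
  /-- `η(X) = g(X, ξ)` -/
  eta_eq_g_xi : ∀ X, eta X = g X xi
  frame_orthonormal : ∀ i j, g (frame i) (frame j) = fun _ => if i = j then (1 : ℝ) else 0
  frame_span : ∀ X, X = ∑ i, g X (frame i) • frame i
  /-- the Kenmotsu condition `(∇_X φ)Y = g(φX, Y)ξ - η(Y)φX` -/
  kenmotsu_eq : ∀ X Y, nabla X (phi Y) - phi (nabla X Y) = g (phi X) Y • xi - eta Y • phi X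

namespace Kenmotsu

variable {n : ℕ} {M VF : Type} [AddCommGroup VF] [Module (M → ℝ) VF]
  [Module ℝ VF] [IsScalarTower ℝ (M → ℝ) VF]

/-- the Riemann curvature tensor `R(X,Y)Z = ∇_X∇_Y Z - ∇_Y∇_X Z - ∇_{[X,Y]}Z` -/
def R (K : Kenmotsu n M VF) (X Y Z : VF) : VF :=
  K.nabla X (K.nabla Y Z) - K.nabla Y (K.nabla X Z) - K.nabla (K.bracket X Y) Z

/-- the Ricci tensor, `Ric(X,Y) = Σᵢ g(R(eᵢ, X)Y, eᵢ)` -/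
def Ric (K : Kenmotsu n M VF) (X Y : VF) : M → ℝ :=
  ∑ i, K.g (K.R (K.frame i) X Y) (K.frame i)

/-- the Ricci operator `Q`, characterized by `g(QX, Y) = Ric(X,Y)` -/
def Q (K : Kenmotsu n M VF) (X : VF) : VF :=
  ∑ i, K.Ric X (K.frame i) • K.frame i

/-- the scalar curvature `r = Σᵢ Ric(eᵢ, eᵢ)` -/
def scal (K : Kenmotsu n M VF) : M → ℝ :=
  ∑ i, K.Ric (K.frame i) (K.frame i)

/-- the Lie derivative of the metric:
`(L_V g)(X,Y) = V(g(X,Y)) - g([V,X],Y) - g(X,[V,Y])` -/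
def lieg (K : Kenmotsu n M VF) (V X Y : VF) : M → ℝ :=
  K.act V (K.g X Y) - K.g (K.bracket V X) Y - K.g X (K.bracket V Y)

/-- the Lie derivative of the connection:
`(L_V ∇)(X,Y) = L_V(∇_X Y) - ∇_X(L_V Y) - ∇_{[V,X]} Y` -/
def lieD (K : Kenmotsu n M VF) (V X Y : VF) : VF :=
  K.bracket V (K.nabla X Y) - K.nabla X (K.bracket V Y) - K.nabla (K.bracket V X) Y

/-- the Lie derivative of the curvature tensor -/
def lieR (K : Kenmotsu n M VF) (V X Y Z : VF) : VF :=
  K.bracket V (K.R X Y Z) - K.R (K.bracket V X) Y Z - K.R X (K.bracket V Y) Z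
    - K.R X Y (K.bracket V Z)

/-- the Lie derivative of the 1-form `η` -/
def lieEta (K : Kenmotsu n M VF) (V X : VF) : M → ℝ :=
  K.act V (K.eta X) - K.eta (K.bracket V X)

/-- covariant derivative of the Ricci operator: `(∇_X Q)Y = ∇_X(QY) - Q(∇_X Y)` -/
def nablaQ (K : Kenmotsu n M VF) (X Y : VF) : VF :=
  K.nabla X (K.Q Y) - K.Q (K.nabla X Y)

/-- the Hessian of a function: `(Hess f)(X,Y) = X(Y(f)) - (∇_X Y)(f)` -/
def hess (K : Kenmotsu n M VF) (f : M → ℝ) (X Y : VF) : M → ℝ :=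
  K.act X (K.act Y f) - K.act (K.nabla X Y) f

/-- `g` represents an η-Ricci soliton with potential vector field `V` and real
constants `λ`, `μ`:  `(1/2)L_V g + Ric + λ g + μ η⊗η = 0`. -/
def IsEtaRicciSoliton (K : Kenmotsu n M VF) (V : VF) (l m : ℝ) : Prop :=
  ∀ X Y, (1 / 2 : ℝ) • K.lieg V X Y + K.Ric X Y + l • K.g X Y
    + m • (K.eta X * K.eta Y) = 0

/-- almost η-Ricci soliton: `λ`, `μ` are smooth functions on `M`. -/
def IsAlmostEtaRicciSoliton (K : Kenmotsu n M VF) (V : VF) (l m : M → ℝ) : Prop :=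
  ∀ X Y, (1 / 2 : ℝ) • K.lieg V X Y + K.Ric X Y + l * K.g X Y
    + m * (K.eta X * K.eta Y) = 0

/-- gradient almost η-Ricci soliton with potential function `f`:
`Hess f + Ric + λ g + μ η⊗η = 0` with `λ`, `μ` smooth functions. -/
def IsGradientAlmostEtaRicciSoliton (K : Kenmotsu n M VF) (f l m : M → ℝ) : Prop :=
  ∀ X Y, K.hess f X Y + K.Ric X Y + l * K.g X Y + m * (K.eta X * K.eta Y) = 0

/-- η-Einstein: `Ric = α g + β η⊗η` for smooth functions `α`, `β`. -/
def IsEtaEinstein (K : Kenmotsu n M VF) : Prop :=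
  ∃ a b : M → ℝ, ∀ X Y, K.Ric X Y = a * K.g X Y + b * (K.eta X * K.eta Y)

/-- Einstein: `Ric` is a constant multiple of `g`. -/
def IsEinstein (K : Kenmotsu n M VF) : Prop :=
  ∃ c : ℝ, ∀ X Y, K.Ric X Y = c • K.g X Y

/-- constant φ-holomorphic sectional curvature `H` (Kenmotsu's space-form
condition):
`4R(X,Y)Z = (H−3){g(Y,Z)X − g(X,Z)Y} + (H+1){η(X)η(Z)Y − η(Y)η(Z)X +
η(Y)g(X,Z)ξ − η(X)g(Y,Z)ξ + g(X,φZ)φY − g(Y,φZ)φX + 2g(X,φY)φZ}`. -/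
def HasConstPhiSectionalCurvature (K : Kenmotsu n M VF) (H : ℝ) : Prop :=
  ∀ X Y Z, (4 : ℝ) • K.R X Y Z
    = (H - 3) • (K.g Y Z • X - K.g X Z • Y)
      + (H + 1) • ((K.eta X * K.eta Z) • Y - (K.eta Y * K.eta Z) • X
        + (K.eta Y * K.g X Z) • K.xi - (K.eta X * K.g Y Z) • K.xi
        + K.g X (K.phi Z) • K.phi Y - K.g Y (K.phi Z) • K.phi X
        + (2 : ℝ) • (K.g X (K.phi Y) • K.phi Z))

end Kenmotsu
namespace Kenmotsu
set_option linter.unusedSectionVars false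

variable {n : ℕ} {M VF : Type} [AddCommGroup VF] [Module (M → ℝ) VF]
  [Module ℝ VF] [IsScalarTower ℝ (M → ℝ) VF] (K : Kenmotsu n M VF)

lemma g_add_right (X Y Z : VF) : K.g X (Y + Z) = K.g X Y + K.g X Z := by
  rw [K.g_symm, K.g_add_left, K.g_symm Y, K.g_symm Z]

lemma g_smul_right (f : M → ℝ) (X Y : VF) : K.g X (f • Y) = f * K.g X Y := by
  rw [K.g_symm, K.g_smul_left, K.g_symm]

lemma g_zero_left (W : VF) : K.g 0 W = 0 := by
  have h : K.g ((0 : M → ℝ) • (0 : VF)) W = 0 := by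
    rw [K.g_smul_left]; exact zero_mul _
  simpa using h

lemma g_zero_right (W : VF) : K.g W 0 = 0 := by rw [K.g_symm]; exact K.g_zero_left W

lemma g_neg_left (X W : VF) : K.g (-X) W = -K.g X W := by
  have h := K.g_add_left X (-X) W
  rw [add_neg_cancel, K.g_zero_left] at h
  exact neg_eq_of_add_eq_zero_right h.symm |>.symm

lemma g_neg_right (X W : VF) : K.g W (-X) = -K.g W X := by
  rw [K.g_symm, K.g_neg_left, K.g_symm]

lemma g_sub_left (X Y W : VF) : K.g (X - Y) W = K.g X W - K.g Y W := by
  rw [sub_eq_add_neg, K.g_add_left, K.g_neg_left, sub_eq_add_neg]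

lemma g_sub_right (X Y W : VF) : K.g W (X - Y) = K.g W X - K.g W Y := by
  rw [K.g_symm, K.g_sub_left, K.g_symm X, K.g_symm Y]

lemma g_sum_right {ι : Type} (X : VF) (s : Finset ι) (Y : ι → VF) :
    K.g X (∑ i ∈ s, Y i) = ∑ i ∈ s, K.g X (Y i) :=
  map_sum (AddMonoidHom.mk' (K.g X) (K.g_add_right X)) Y s

lemma g_ext {X Y : VF} (h : ∀ W, K.g X W = K.g Y W) : X = Y := by
  rw [K.frame_span X, K.frame_span Y]
  exact Finset.sum_congr rfl fun i _ => by rw [h]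

lemma act_zero (X : VF) : K.act X (0 : M → ℝ) = 0 := K.act_const X 0

lemma act_one (X : VF) : K.act X (1 : M → ℝ) = 0 := K.act_const X 1

lemma nabla_zero_right (X : VF) : K.nabla X 0 = 0 := by
  have h := K.nabla_leibniz X (0 : M → ℝ) (0 : VF)
  rw [zero_smul, K.act_zero, zero_smul, zero_smul, zero_add] at h
  exact h

lemma nabla_neg_right (X Y : VF) : K.nabla X (-Y) = -K.nabla X Y := by
  have h := K.nabla_add_right X Y (-Y)
  rw [add_neg_cancel, K.nabla_zero_right] at h
  exact (neg_eq_of_add_eq_zero_right h.symm).symm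

lemma nabla_sub_right (X Y Z : VF) : K.nabla X (Y - Z) = K.nabla X Y - K.nabla X Z := by
  rw [sub_eq_add_neg, K.nabla_add_right, K.nabla_neg_right, sub_eq_add_neg]

lemma g_xi_xi : K.g K.xi K.xi = 1 := by
  have := K.eta_eq_g_xi K.xi
  rw [K.eta_xi] at this
  exact this.symm

lemma phi_phi_xi : K.phi (K.phi K.xi) = 0 := by
  rw [K.phi_phi, K.eta_xi]
  have : ((fun _ => (1:ℝ)) : M → ℝ) = (1 : M → ℝ) := rfl
  rw [this, one_smul, neg_add_cancel]

lemma phi_xi : K.phi K.xi = 0 := by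
  -- g (phi xi) (phi Y) = 0
  have h1 : ∀ Y, K.g (K.phi K.xi) (K.phi Y) = 0 := by
    intro Y
    rw [K.acm_compatible, K.eta_xi, K.eta_eq_g_xi Y, K.g_symm Y]
    funext p; simp
  -- g X (phi xi) = eta X * eta (phi xi)
  have h2 : ∀ X, K.g X (K.phi K.xi) = K.eta X * K.eta (K.phi K.xi) := by
    intro X
    have := K.acm_compatible X (K.phi K.xi)
    rw [K.phi_phi_xi, K.g_zero_right] at this
    exact sub_eq_zero.mp this.symm
  have h3 : K.eta (K.phi K.xi) = 0 := by
    have ha := h2 (K.phi K.xi)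
    rw [h1 K.xi] at ha
    rw [K.eta_eq_g_xi]
    funext p
    have := congrFun ha p
    simp only [Pi.mul_apply, Pi.zero_apply] at this ⊢
    rw [K.eta_eq_g_xi] at this
    nlinarith [this]
  apply K.g_ext
  intro W
  rw [K.g_zero_left, K.g_symm, h2 W, h3, mul_zero]

lemma eta_phi (X : VF) : K.eta (K.phi X) = 0 := by
  have h := K.acm_compatible (K.phi X) (K.phi X)
  rw [K.phi_phi] at h
  have hgx : K.g (-X + K.eta X • K.xi) (-X + K.eta X • K.xi)
      = K.g X X - K.eta X * K.eta X := by
    simp only [K.g_add_left, K.g_add_right, K.g_neg_left, K.g_neg_right,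
      K.g_smul_left, K.g_smul_right, K.g_xi_xi, K.eta_eq_g_xi X, K.g_symm K.xi X]
    funext p
    simp only [Pi.add_apply, Pi.sub_apply, Pi.mul_apply, Pi.neg_apply, Pi.one_apply]
    ring
  rw [hgx, K.acm_compatible] at h
  funext p
  have h2 := congrFun h p
  simp only [Pi.sub_apply, Pi.mul_apply, Pi.zero_apply] at h2 ⊢
  nlinarith [h2]

lemma eta_nabla_xi (X : VF) : K.g (K.nabla X K.xi) K.xi = 0 := by
  have h := K.metric_compat X K.xi K.xi
  rw [K.g_xi_xi, K.act_one, K.g_symm K.xi (K.nabla X K.xi)] at h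
  funext p
  have := congrFun h p
  simp only [Pi.add_apply, Pi.zero_apply] at this ⊢
  linarith

lemma nabla_xi (X : VF) : K.nabla X K.xi = X - K.eta X • K.xi := by
  have hk := K.kenmotsu_eq X K.xi
  rw [K.phi_xi, K.nabla_zero_right, K.eta_xi] at hk
  have hgpx : K.g (K.phi X) K.xi = 0 := by
    rw [← K.eta_eq_g_xi]; exact K.eta_phi X
  rw [hgpx, zero_smul, zero_sub] at hk
  have h1 : ((fun _ => (1:ℝ)) : M → ℝ) = (1 : M → ℝ) := rfl
  rw [h1, one_smul] at hk
  have hphi : K.phi (K.nabla X K.xi) = K.phi X := by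
    have := congrArg Neg.neg hk
    simpa [zero_sub] using this
  have h2 := congrArg K.phi hphi
  rw [K.phi_phi, K.phi_phi] at h2
  have h3 : K.eta (K.nabla X K.xi) = 0 := by
    rw [K.eta_eq_g_xi]; exact K.eta_nabla_xi X
  rw [h3, zero_smul, add_zero] at h2
  have := congrArg Neg.neg h2
  simp only [neg_neg, neg_add] at this
  rw [this]
  abel

end Kenmotsu
namespace Kenmotsu
set_option linter.unusedSectionVars false

variable {n : ℕ} {M VF : Type} [AddCommGroup VF] [Module (M → ℝ) VF]
  [Module ℝ VF] [IsScalarTower ℝ (M → ℝ) VF] (K : Kenmotsu n M VF)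

lemma R_xi (X Y : VF) : K.R X Y K.xi = K.eta X • Y - K.eta Y • X := by
  have hdX : ∀ A B : VF, K.act A (K.eta B)
      = K.g (K.nabla A B) K.xi + K.g B A - K.eta A * K.eta B := by
    intro A B
    rw [K.eta_eq_g_xi B, K.metric_compat A B K.xi, K.nabla_xi A, K.g_sub_right,
      K.g_smul_right, K.eta_eq_g_xi A]
    ring
  have hb : K.eta (K.bracket X Y) = K.g (K.nabla X Y) K.xi - K.g (K.nabla Y X) K.xi := by
    rw [K.eta_eq_g_xi, ← K.torsion_free, K.g_sub_left]
  show K.nabla X (K.nabla Y K.xi) - K.nabla Y (K.nabla X K.xi)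
      - K.nabla (K.bracket X Y) K.xi = _
  rw [K.nabla_xi Y, K.nabla_xi X, K.nabla_xi (K.bracket X Y),
    K.nabla_sub_right X, K.nabla_sub_right Y, K.nabla_leibniz, K.nabla_leibniz,
    K.nabla_xi X, K.nabla_xi Y, hdX X Y, hdX Y X, hb, ← K.torsion_free,
    K.g_symm Y X]
  module

lemma Ric_xi (X : VF) : K.Ric X K.xi = fun p => -(2 * (n : ℝ)) * K.eta X p := by
  have hspan : K.g X K.xi = ∑ i, K.g K.xi (K.frame i) * K.g X (K.frame i) := by
    conv_lhs => rw [K.frame_span K.xi]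
    rw [K.g_sum_right]
    exact Finset.sum_congr rfl fun i _ => K.g_smul_right _ _ _
  have hterm : ∀ i : Fin (2 * n + 1), K.g (K.R (K.frame i) X K.xi) (K.frame i)
      = K.g K.xi (K.frame i) * K.g X (K.frame i) - K.eta X := by
    intro i
    rw [K.R_xi, K.g_sub_left, K.g_smul_left, K.g_smul_left, K.frame_orthonormal,
      K.eta_eq_g_xi (K.frame i), K.g_symm (K.frame i) K.xi]
    funext p
    simp
  funext p
  have hR : K.Ric X K.xi p
      = ∑ i, (K.g K.xi (K.frame i) * K.g X (K.frame i) - K.eta X) p := by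
    show (∑ i, K.g (K.R (K.frame i) X K.xi) (K.frame i)) p = _
    rw [Finset.sum_apply]
    exact Finset.sum_congr rfl fun i _ => by rw [hterm]
  rw [hR]
  have h1 : ∑ i, (K.g K.xi (K.frame i) * K.g X (K.frame i) - K.eta X) p
      = (∑ i : Fin (2 * n + 1), K.g K.xi (K.frame i) p * K.g X (K.frame i) p)
        - (2 * n + 1) * K.eta X p := by
    simp only [Pi.sub_apply, Pi.mul_apply, Finset.sum_sub_distrib,
      Finset.sum_const, Finset.card_univ, Fintype.card_fin, nsmul_eq_mul]
    push_cast
    ring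
  have h2 : K.eta X p = ∑ i : Fin (2 * n + 1), K.g K.xi (K.frame i) p * K.g X (K.frame i) p := by
    have := congrFun hspan p
    rw [K.eta_eq_g_xi, this, Finset.sum_apply]
    exact Finset.sum_congr rfl fun i _ => rfl
  rw [h1, ← h2]
  ring

lemma lieg_tau (τ : M → ℝ) (X Y : VF) :
    K.lieg (τ • K.xi) X Y
      = K.act X τ * K.eta Y + K.act Y τ * K.eta X
        + 2 * (τ * K.g X Y) - 2 * (τ * (K.eta X * K.eta Y)) := by
  show K.act (τ • K.xi) (K.g X Y) - K.g (K.bracket (τ • K.xi) X) Y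
      - K.g X (K.bracket (τ • K.xi) Y) = _
  rw [← K.torsion_free, ← K.torsion_free, K.metric_compat]
  rw [K.nabla_leibniz X τ K.xi, K.nabla_leibniz Y τ K.xi, K.nabla_xi X, K.nabla_xi Y]
  simp only [K.g_sub_left, K.g_sub_right, K.g_add_left, K.g_add_right,
    K.g_smul_left, K.g_smul_right]
  rw [K.eta_eq_g_xi X, K.eta_eq_g_xi Y, K.g_symm K.xi Y]
  ring

end Kenmotsu

/-- If a Kenmotsu manifold `M^{2n+1}` admits an almost η-Ricci
soliton with potential vector field `V = τξ` (`τ` a smooth function) and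
soliton functions `λ`, `μ`, then `ξ(τ) = 2n − λ − μ` and
`Ric = −(τ+λ)g − (2n − τ − λ)η⊗η`; in particular it is η-Einstein. -/
theorem almostEtaRicciSoliton_collinear_etaEinstein
    (n : ℕ) (M VF : Type) [AddCommGroup VF] [Module (M → ℝ) VF]
    [Module ℝ VF] [IsScalarTower ℝ (M → ℝ) VF]
    (K : Kenmotsu n M VF) (V : VF) (l m : M → ℝ)
    (hsol : K.IsAlmostEtaRicciSoliton V l m)
    (τ : M → ℝ) (hV : V = τ • K.xi) :
    (K.act K.xi τ = fun p => 2 * (n : ℝ) - l p - m p) ∧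
      (∀ X Y, K.Ric X Y
        = -((τ + l) * K.g X Y)
          - (fun p => 2 * (n : ℝ) - τ p - l p) * (K.eta X * K.eta Y)) ∧
      K.IsEtaEinstein := by
  subst hV
  have hsolP : ∀ (X Y : VF) (p : M),
      (1/2 : ℝ) * (K.act X τ p * K.eta Y p + K.act Y τ p * K.eta X p
        + 2 * (τ p * K.g X Y p) - 2 * (τ p * (K.eta X p * K.eta Y p)))
      + K.Ric X Y p + l p * K.g X Y p + m p * (K.eta X p * K.eta Y p) = 0 := by
    intro X Y p
    have h := congrFun (hsol X Y) p
    rw [K.lieg_tau] at h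
    simp only [Pi.add_apply, Pi.sub_apply, Pi.mul_apply, Pi.smul_apply,
      smul_eq_mul, Pi.zero_apply, Pi.ofNat_apply] at h
    linear_combination h
  have heta1 : ∀ p, K.eta K.xi p = 1 := fun p => by rw [K.eta_xi]
  have hg1 : ∀ p, K.g K.xi K.xi p = 1 := fun p => by rw [K.g_xi_xi]; rfl
  have hgx : ∀ (X : VF) (p : M), K.g X K.xi p = K.eta X p :=
    fun X p => (congrFun (K.eta_eq_g_xi X) p).symm
  have hRx : ∀ (X : VF) (p : M), K.Ric X K.xi p = -(2 * (n : ℝ)) * K.eta X p :=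
    fun X p => congrFun (K.Ric_xi X) p
  have claim1P : ∀ p, K.act K.xi τ p = 2 * (n : ℝ) - l p - m p := by
    intro p
    have h := hsolP K.xi K.xi p
    rw [hRx K.xi p, heta1 p, hg1 p] at h
    linarith
  have hD : ∀ (X : VF) (p : M),
      K.act X τ p = (2 * (n : ℝ) - l p - m p) * K.eta X p := by
    intro X p
    have h := hsolP X K.xi p
    rw [hRx X p, heta1 p, hgx X p, claim1P p] at h
    linear_combination 2 * h
  have claim2P : ∀ (X Y : VF) (p : M),
      K.Ric X Y p = -((τ p + l p) * K.g X Y p)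
        - (2 * (n : ℝ) - τ p - l p) * (K.eta X p * K.eta Y p) := by
    intro X Y p
    have h := hsolP X Y p
    linear_combination h - K.eta Y p / 2 * hD X p - K.eta X p / 2 * hD Y p
  refine ⟨funext claim1P, fun X Y => ?_, ?_⟩
  · funext p
    simp only [Pi.sub_apply, Pi.neg_apply, Pi.mul_apply, Pi.add_apply]
    linear_combination claim2P X Y p
  · refine ⟨fun p => -(τ p + l p), fun p => -(2 * (n : ℝ) - τ p - l p), fun X Y => ?_⟩
    funext p
    simp only [Pi.add_apply, Pi.mul_apply]
    linear_combination claim2P X Y p
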